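/- arXiv:1403.0537 — 2 statements merged into one kernel-verified Lean document; each statement's English description precedes it below -/
import Mathlib

section
/- For 0 ≤ k < 1 and x ≥ 0, Ie(k,x) = (1/√(1-k²)) - (1/π)·∫₀^π e^{-x(1 - k·cosθ)}/(1 - k·cosθ) dθ. -/
open Real intervalIntegral

/-- Modified Bessel function of the first kind, order zero. -/
noncomputable def besselI0 (z : ℝ) : ℝ := ∑' n : ℕ, (z / 2) ^ (2 * n) / (n.factorial : ℝ) ^ 2

/-- Rice Ie-function. -/
noncomputable def riceIe (k x : ℝ) : ℝ := ∫ t in (0:ℝ)..x, Real.exp (-t) * besselI0 (k * t)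

open MeasureTheory Filter Topology Set

lemma cos_pow_step (n : ℕ) :
    (∫ θ in (0:ℝ)..π, Real.cos θ ^ (n + 2)) =
      (n + 1) / (n + 2) * ∫ θ in (0:ℝ)..π, Real.cos θ ^ n := by
  rw [integral_cos_pow]
  simp

lemma cos_pow_odd (m : ℕ) : (∫ θ in (0:ℝ)..π, Real.cos θ ^ (2 * m + 1)) = 0 := by
  induction m with
  | zero => simp
  | succ p ih =>
    have : 2 * (p + 1) + 1 = (2 * p + 1) + 2 := by ring
    rw [this, cos_pow_step, ih, mul_zero]

lemma cos_pow_even (m : ℕ) :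
    (∫ θ in (0:ℝ)..π, Real.cos θ ^ (2 * m)) =
      π * ((2 * m).factorial : ℝ) / (4 ^ m * ((m.factorial : ℝ)) ^ 2) := by
  induction m with
  | zero => simp
  | succ p ih =>
    have h2 : 2 * (p + 1) = (2 * p) + 2 := by ring
    rw [h2, cos_pow_step, ih]
    have e1 : ((2 * p + 2).factorial : ℝ)
        = (2 * p + 2) * ((2 * p + 1) * ((2 * p).factorial : ℝ)) := by
      have h3 : 2 * p + 2 = (2 * p + 1) + 1 := by ring
      rw [h3, Nat.factorial_succ]
      push_cast [Nat.factorial_succ]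
      ring
    have e2 : (((p + 1).factorial : ℝ)) = (p + 1) * (p.factorial : ℝ) := by
      push_cast [Nat.factorial_succ]; ring
    rw [e1, e2]
    have hf : ((2 * p).factorial : ℝ) ≠ 0 := Nat.cast_ne_zero.2 (Nat.factorial_ne_zero _)
    have hf2 : ((p).factorial : ℝ) ≠ 0 := Nat.cast_ne_zero.2 (Nat.factorial_ne_zero _)
    have h4 : (4:ℝ) ^ p ≠ 0 := by positivity
    field_simp
    push_cast
    ring

lemma besselI0_def' (z : ℝ) : besselI0 z = ∑' n : ℕ, (z / 2) ^ (2 * n) / (n.factorial : ℝ) ^ 2 := rfl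

lemma besselI0_eq_integral (z : ℝ) :
    besselI0 z = (1 / π) * ∫ θ in (0:ℝ)..π, Real.exp (z * Real.cos θ) := by
  have hrw : ∀ θ : ℝ, Real.exp (z * Real.cos θ)
      = ∑' n : ℕ, (z ^ n / (n.factorial : ℝ)) * Real.cos θ ^ n := by
    intro θ
    calc Real.exp (z * Real.cos θ) = ∑' n : ℕ, (z * Real.cos θ) ^ n / (n.factorial : ℝ) := by
          rw [Real.exp_eq_exp_ℝ, NormedSpace.exp_eq_tsum_div]
      _ = _ := tsum_congr fun n => by rw [mul_pow]; ring
  have hswap : (∫ θ in Set.Ioc (0:ℝ) π, Real.exp (z * Real.cos θ))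
      = ∑' n : ℕ, ∫ θ in Set.Ioc (0:ℝ) π, (z ^ n / (n.factorial : ℝ)) * Real.cos θ ^ n := by
    rw [show (fun θ => Real.exp (z * Real.cos θ))
        = fun θ => ∑' n : ℕ, (z ^ n / (n.factorial : ℝ)) * Real.cos θ ^ n from funext hrw]
    refine (MeasureTheory.integral_tsum_of_summable_integral_norm (fun n => ?_) ?_).symm
    · exact (Continuous.integrableOn_Ioc (by fun_prop))
    · apply Summable.of_nonneg_of_le
        (fun n => integral_nonneg fun θ => norm_nonneg _)
        (fun n => ?_)
        (((Real.summable_pow_div_factorial |z|).mul_left π))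
      have hle : ∀ θ ∈ Set.Ioc (0:ℝ) π,
          ‖(z ^ n / (n.factorial : ℝ)) * Real.cos θ ^ n‖ ≤ |z| ^ n / (n.factorial : ℝ) := by
        intro θ _
        rw [norm_mul, norm_div, norm_pow, norm_pow]
        have h1 : ‖Real.cos θ‖ ^ n ≤ 1 := by
          apply pow_le_one₀ (norm_nonneg _)
          exact Real.abs_cos_le_one θ
        calc ‖z‖ ^ n / ‖(n.factorial : ℝ)‖ * ‖Real.cos θ‖ ^ n
            ≤ ‖z‖ ^ n / ‖(n.factorial : ℝ)‖ * 1 := by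
              apply mul_le_mul_of_nonneg_left h1 (by positivity)
          _ = |z| ^ n / (n.factorial : ℝ) := by
              rw [mul_one, Real.norm_eq_abs, Real.norm_natCast]
      calc (∫ θ in Set.Ioc (0:ℝ) π, ‖(z ^ n / (n.factorial : ℝ)) * Real.cos θ ^ n‖)
          ≤ ∫ _ in Set.Ioc (0:ℝ) π, |z| ^ n / (n.factorial : ℝ) := by
            apply MeasureTheory.setIntegral_mono_on
            · exact (Continuous.integrableOn_Ioc (by fun_prop)).norm
            · exact MeasureTheory.integrableOn_const measure_Ioc_lt_top.ne
            · exact measurableSet_Ioc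
            · exact hle
        _ = π * (|z| ^ n / (n.factorial : ℝ)) := by
            rw [MeasureTheory.setIntegral_const, MeasureTheory.measureReal_def, Real.volume_Ioc, smul_eq_mul]
            rw [ENNReal.toReal_ofReal (by simpa using Real.pi_nonneg)]
            ring
  have hterm : ∀ n : ℕ, (∫ θ in Set.Ioc (0:ℝ) π, (z ^ n / (n.factorial : ℝ)) * Real.cos θ ^ n)
      = z ^ n / (n.factorial : ℝ) * ∫ θ in (0:ℝ)..π, Real.cos θ ^ n := fun n => by
    rw [MeasureTheory.integral_const_mul, intervalIntegral.integral_of_le Real.pi_nonneg]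
  have hae : ∀ m : ℕ, (z ^ (2 * m) / ((2 * m).factorial : ℝ) * ∫ θ in (0:ℝ)..π, Real.cos θ ^ (2 * m))
      = π * ((z / 2) ^ (2 * m) / ((m.factorial : ℝ)) ^ 2) := by
    intro m
    have hz : (z / 2) ^ (2 * m) = z ^ (2 * m) / 4 ^ m := by
      rw [div_pow]
      congr 1
      rw [pow_mul]; norm_num
    rw [cos_pow_even, hz]
    have h1 : ((2 * m).factorial : ℝ) ≠ 0 := Nat.cast_ne_zero.2 (Nat.factorial_ne_zero _)
    have h2 : ((m.factorial : ℝ)) ≠ 0 := Nat.cast_ne_zero.2 (Nat.factorial_ne_zero _)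
    have h4 : (4:ℝ) ^ m ≠ 0 := by positivity
    field_simp
  have heven : Summable fun m : ℕ => π * ((z / 2) ^ (2 * m) / ((m.factorial : ℝ)) ^ 2) := by
    apply Summable.of_nonneg_of_le (fun m => by rw [pow_mul]; positivity) (fun m => ?_)
      ((Real.summable_pow_div_factorial ((z / 2) ^ 2)).mul_left π)
    rw [pow_mul]
    apply mul_le_mul_of_nonneg_left _ Real.pi_nonneg
    have hm : (1 : ℝ) ≤ (m.factorial : ℝ) := by
      exact_mod_cast Nat.one_le_iff_ne_zero.2 (Nat.factorial_ne_zero m)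
    apply div_le_div_of_nonneg_left (by positivity) (by positivity)
    nlinarith
  have hsum : (∑' n : ℕ, z ^ n / (n.factorial : ℝ) * ∫ θ in (0:ℝ)..π, Real.cos θ ^ n)
      = π * besselI0 z := by
    rw [← tsum_even_add_odd (by simpa only [hae] using heven)
      (by simp only [cos_pow_odd, mul_zero]; exact summable_zero)]
    simp only [hae, cos_pow_odd, mul_zero, tsum_zero, add_zero]
    rw [tsum_mul_left, besselI0_def']
  rw [intervalIntegral.integral_of_le Real.pi_nonneg, hswap]
  simp only [hterm]
  rw [hsum, ← mul_assoc, one_div_mul_cancel Real.pi_ne_zero, one_mul]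

lemma one_sub_mul_cos_pos {k : ℝ} (hk0 : 0 ≤ k) (hk1 : k < 1) (θ : ℝ) :
    0 < 1 - k * Real.cos θ := by
  nlinarith [Real.cos_le_one θ, Real.neg_one_le_cos θ]

lemma poisson_integral {k : ℝ} (hk0 : 0 ≤ k) (hk1 : k < 1) :
    (∫ θ in (0:ℝ)..π, 1 / (1 - k * Real.cos θ)) = π / Real.sqrt (1 - k ^ 2) := by
  set s := Real.sqrt (1 - k ^ 2) with hs
  set c := Real.sqrt ((1 + k) / (1 - k)) with hc
  have hk1' : (0:ℝ) < 1 - k := by linarith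
  have hk2 : (0:ℝ) < 1 - k ^ 2 := by nlinarith
  have hspos : 0 < s := Real.sqrt_pos.2 hk2
  have hcpos : 0 < c := Real.sqrt_pos.2 (by positivity)
  have hc2 : c ^ 2 = (1 + k) / (1 - k) := Real.sq_sqrt (by positivity)
  have hcs : c * (1 - k) = s := by
    rw [hc, hs, show (1 - k : ℝ) = Real.sqrt ((1 - k) ^ 2) from (Real.sqrt_sq hk1'.le).symm,
      ← Real.sqrt_mul (by positivity)]
    congr 1
    rw [Real.sqrt_sq hk1'.le]
    field_simp
    ring
  set f : ℝ → ℝ := fun θ => 2 / s * Real.arctan (c * Real.tan (θ / 2)) with hf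
  have hint : IntervalIntegrable (fun θ => 1 / (1 - k * Real.cos θ)) MeasureTheory.volume 0 π := by
    apply Continuous.intervalIntegrable
    exact continuous_const.div (by fun_prop) fun θ => (one_sub_mul_cos_pos hk0 hk1 θ).ne'
  have hderiv : ∀ θ ∈ Set.Ioo (0:ℝ) π, HasDerivAt f (1 / (1 - k * Real.cos θ)) θ := by
    intro θ hθ
    have hu2 : θ / 2 < π / 2 := by linarith [hθ.2]
    have hcu : 0 < Real.cos (θ / 2) :=
      Real.cos_pos_of_mem_Ioo ⟨by linarith [hθ.1, Real.pi_pos], hu2⟩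
    have h1 : HasDerivAt (fun θ : ℝ => θ / 2) (1 / 2) θ := by
      simpa using (hasDerivAt_id θ).div_const 2
    have h2 : HasDerivAt Real.tan (1 / Real.cos (θ / 2) ^ 2) (θ / 2) :=
      Real.hasDerivAt_tan hcu.ne'
    have h3 := (h2.comp θ h1).const_mul c
    have h4 := ((Real.hasDerivAt_arctan (c * Real.tan (θ / 2))).comp θ h3).const_mul (2 / s)
    refine h4.congr_deriv (Eq.symm ?_)
    have hcosθ : Real.cos θ = 2 * Real.cos (θ / 2) ^ 2 - 1 := by
      conv_lhs => rw [show θ = 2 * (θ / 2) by ring]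
      rw [Real.cos_two_mul]
    have hden : (0:ℝ) < 1 - k * Real.cos θ := one_sub_mul_cos_pos hk0 hk1 θ
    have key : 1 + (c * Real.tan (θ / 2)) ^ 2
        = (1 - k * Real.cos θ) / ((1 - k) * Real.cos (θ / 2) ^ 2) := by
      rw [Real.tan_eq_sin_div_cos, mul_pow, hc2, div_pow, Real.sin_sq]
      rw [hcosθ]
      field_simp
      ring
    simp only [Function.comp_def, key]
    rw [← hcs]
    rw [one_div_div]
    field_simp
  have hcont0 : ContinuousAt f 0 := by
    have ht : ContinuousAt (fun θ : ℝ => Real.tan (θ / 2)) 0 := by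
      apply ContinuousAt.comp (g := Real.tan)
      · exact Real.continuousAt_tan.2 (by norm_num)
      · fun_prop
    exact continuousAt_const.mul
      ((Real.continuous_arctan.continuousAt).comp (continuousAt_const.mul ht))
  have ha : Tendsto f (𝓝[>] (0:ℝ)) (𝓝 0) := by
    have h0 : f 0 = 0 := by simp [hf]
    have : Tendsto f (𝓝 (0:ℝ)) (𝓝 0) := by simpa [h0] using hcont0.tendsto
    exact this.mono_left nhdsWithin_le_nhds
  have hb : Tendsto f (𝓝[<] π) (𝓝 (π / s)) := by
    have t1 : Tendsto (fun θ : ℝ => θ / 2) (𝓝[<] π) (𝓝[<] (π / 2)) := by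
      apply tendsto_nhdsWithin_of_tendsto_nhds_of_eventually_within
      · exact ((continuous_id.div_const 2).continuousAt).tendsto.mono_left nhdsWithin_le_nhds
      · filter_upwards [self_mem_nhdsWithin] with θ (hθ : θ < π)
        exact (by linarith : θ / 2 < π / 2)
    have t2 : Tendsto (fun θ : ℝ => Real.tan (θ / 2)) (𝓝[<] π) atTop :=
      Real.tendsto_tan_pi_div_two.comp t1
    have t3 : Tendsto (fun θ : ℝ => c * Real.tan (θ / 2)) (𝓝[<] π) atTop :=
      t2.const_mul_atTop hcpos
    have t4 : Tendsto (fun θ : ℝ => Real.arctan (c * Real.tan (θ / 2))) (𝓝[<] π) (𝓝 (π / 2)) :=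
      (Real.tendsto_arctan_atTop.mono_right nhdsWithin_le_nhds).comp t3
    have t5 := t4.const_mul (2 / s)
    rw [show π / s = 2 / s * (π / 2) by ring]
    exact t5
  rw [integral_eq_sub_of_hasDerivAt_of_tendsto Real.pi_pos hderiv hint ha hb, sub_zero]

theorem rice_Ie_eq_integral (k x : ℝ) (hk0 : 0 ≤ k) (hk1 : k < 1) (hx : 0 ≤ x) :
    riceIe k x =
      1 / Real.sqrt (1 - k ^ 2) -
        (1 / π) * ∫ θ in (0:ℝ)..π,
          Real.exp (-x * (1 - k * Real.cos θ)) / (1 - k * Real.cos θ) := by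
  have hden : ∀ θ : ℝ, (0:ℝ) < 1 - k * Real.cos θ := one_sub_mul_cos_pos hk0 hk1
  have h1 : ∀ t : ℝ, Real.exp (-t) * besselI0 (k * t)
      = (1 / π) * ∫ θ in (0:ℝ)..π, Real.exp (-(t * (1 - k * Real.cos θ))) := by
    intro t
    rw [besselI0_eq_integral, mul_left_comm]
    congr 1
    rw [← intervalIntegral.integral_const_mul]
    refine intervalIntegral.integral_congr fun θ _ => ?_
    show Real.exp (-t) * Real.exp (k * t * Real.cos θ) = Real.exp (-(t * (1 - k * Real.cos θ)))
    rw [← Real.exp_add]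
    congr 1
    ring
  have hswap : (∫ t in (0:ℝ)..x, ∫ θ in (0:ℝ)..π, Real.exp (-(t * (1 - k * Real.cos θ))))
      = ∫ θ in (0:ℝ)..π, ∫ t in (0:ℝ)..x, Real.exp (-(t * (1 - k * Real.cos θ))) := by
    simp only [intervalIntegral.integral_of_le hx, intervalIntegral.integral_of_le Real.pi_nonneg]
    apply MeasureTheory.integral_integral_swap
    have hcont : Continuous (Function.uncurry fun (t θ : ℝ) =>
        Real.exp (-(t * (1 - k * Real.cos θ)))) := by fun_prop
    rw [MeasureTheory.Measure.prod_restrict, ← MeasureTheory.Measure.volume_eq_prod]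
    exact (hcont.continuousOn.integrableOn_compact (isCompact_Icc.prod isCompact_Icc)).mono_set
      (Set.prod_mono Set.Ioc_subset_Icc_self Set.Ioc_subset_Icc_self)
  have hH : ∀ θ : ℝ, (∫ t in (0:ℝ)..x, Real.exp (-(t * (1 - k * Real.cos θ))))
      = 1 / (1 - k * Real.cos θ)
        - Real.exp (-x * (1 - k * Real.cos θ)) / (1 - k * Real.cos θ) := by
    intro θ
    set a : ℝ := 1 - k * Real.cos θ with ha
    have hapos : 0 < a := hden θ
    have hd : ∀ t : ℝ, HasDerivAt (fun t => -(1 / a) * Real.exp (-(t * a)))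
        (Real.exp (-(t * a))) t := by
      intro t
      have hlin : HasDerivAt (fun t : ℝ => -(t * a)) (-a) t := by
        exact (((hasDerivAt_id t).mul_const a).neg).congr_deriv (by simp)
      have := hlin.exp.const_mul (-(1 / a))
      refine this.congr_deriv (Eq.symm ?_)
      field_simp
    rw [intervalIntegral.integral_eq_sub_of_hasDerivAt (fun t _ => hd t)
      (Continuous.intervalIntegrable (by fun_prop) _ _)]
    rw [show -x * a = -(x * a) by ring]
    field_simp
    rw [mul_zero, neg_zero, Real.exp_zero]
    ring
  have hf1 : IntervalIntegrable (fun θ : ℝ => 1 / (1 - k * Real.cos θ))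
      MeasureTheory.volume 0 π :=
    (continuous_const.div (by fun_prop) fun θ => (hden θ).ne').intervalIntegrable _ _
  have hf2 : IntervalIntegrable
      (fun θ : ℝ => Real.exp (-x * (1 - k * Real.cos θ)) / (1 - k * Real.cos θ))
      MeasureTheory.volume 0 π :=
    (Continuous.div (by fun_prop) (by fun_prop) fun θ => (hden θ).ne').intervalIntegrable _ _
  have : riceIe k x = (1 / π) * ∫ θ in (0:ℝ)..π,
      (1 / (1 - k * Real.cos θ)
        - Real.exp (-x * (1 - k * Real.cos θ)) / (1 - k * Real.cos θ)) := by
    rw [riceIe]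
    simp only [h1]
    rw [intervalIntegral.integral_const_mul, hswap]
    congr 1
    exact intervalIntegral.integral_congr fun θ _ => hH θ
  rw [this, intervalIntegral.integral_sub hf1 hf2, poisson_integral hk0 hk1, mul_sub]
  congr 1
  rw [div_mul_div_comm, one_mul, ← div_div, div_self Real.pi_ne_zero]
end

section
/- Let 0 < q ≤ 1, γ̄ > 0, and γ(θ,q) = γ̄·(1 - ((1-q²)/(1+q²))·cosθ). Then for all x ≥ 0, the cumulative distribution function of the squared Hoyt distribution equals F(x) = 1 - (1/π)·∫₀^π e^{-x/γ(θ,q)} dθ. -/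
open Real intervalIntegral
open MeasureTheory Filter Topology Set

lemma integral_cos_pow_odd' (n : ℕ) :
    (∫ θ in (0:ℝ)..π, Real.cos θ ^ (2 * n + 1)) = 0 := by
  induction n with
  | zero => simpa using integral_cos (a := (0:ℝ)) (b := π)
  | succ n ih =>
      have h : 2 * (n+1) + 1 = (2*n+1) + 2 := by ring
      rw [h, integral_cos_pow, ih]
      simp

lemma integral_cos_pow_even' (n : ℕ) :
    (∫ θ in (0:ℝ)..π, Real.cos θ ^ (2 * n)) =
      π * ((2*n).factorial : ℝ) / (4 ^ n * ((n.factorial:ℝ))^2) := by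
  induction n with
  | zero => simp
  | succ n ih =>
      have h : 2 * (n+1) = (2*n) + 2 := by ring
      rw [h, integral_cos_pow, ih]
      have h1 : ((2*(n+1)).factorial : ℝ) = (2*n+2) * (2*n+1) * ((2*n).factorial) := by
        have : 2*(n+1) = (2*n+1) + 1 := by ring
        rw [this, Nat.factorial_succ, Nat.factorial_succ]
        push_cast; ring
      have h2 : ((n+1).factorial : ℝ) = (n+1) * n.factorial := by
        rw [Nat.factorial_succ]; push_cast; ring
      have hf : ((2*n).factorial : ℝ) ≠ 0 := by positivity
      have hnf : ((n.factorial : ℝ)) ≠ 0 := by positivity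
      have h1' : ((2*n+2).factorial : ℝ) = (2*n+2) * (2*n+1) * ((2*n).factorial) := by
        rw [show 2*n+2 = (2*n+1)+1 by ring, Nat.factorial_succ, Nat.factorial_succ]
        push_cast; ring
      rw [h1', h2]
      simp [Real.sin_pi]
      push_cast
      field_simp
      ring

lemma besselI0_summable (z : ℝ) :
    Summable (fun n : ℕ => (z/2)^(2*n)/(n.factorial:ℝ)^2) := by
  simp_rw [pow_mul]
  refine Summable.of_nonneg_of_le (fun n => by positivity) (fun n => ?_)
    (Real.summable_pow_div_factorial ((z/2)^2))
  have h1 : (1:ℝ) ≤ (n.factorial : ℝ) := by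
    exact_mod_cast Nat.one_le_iff_ne_zero.mpr n.factorial_ne_zero
  have h2 : (n.factorial : ℝ) ≤ (n.factorial:ℝ)^2 := by nlinarith
  gcongr

lemma besselI0_pi (z : ℝ) :
    π * besselI0 z = ∫ θ in (0:ℝ)..π, Real.exp (z * Real.cos θ) := by
  set g : ℕ → ℝ := fun n => z^n / (n.factorial:ℝ) * ∫ θ in (0:ℝ)..π, Real.cos θ ^ n with hg
  have hinj : Function.Injective (fun m : ℕ => 2*m) := fun a b h => by simpa using h
  have hcomp : (g ∘ (fun m : ℕ => 2*m)) = fun m => π * ((z/2)^(2*m)/(m.factorial:ℝ)^2) := by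
    funext m
    simp only [Function.comp_apply, hg]
    rw [integral_cos_pow_even']
    have hfac : ((2*m).factorial : ℝ) ≠ 0 := by positivity
    have hfac2 : ((m.factorial:ℝ)) ≠ 0 := by positivity
    have hz : (z/2)^(2*m) = z^(2*m)/4^m := by
      rw [div_pow]
      congr 1
      rw [pow_mul]
      norm_num
    rw [hz]
    field_simp
  have hzero : ∀ x ∉ Set.range (fun m : ℕ => 2*m), g x = 0 := by
    intro x hx
    rcases Nat.even_or_odd x with he | ho
    · obtain ⟨m, hm⟩ := he
      exact absurd ⟨m, by simp; omega⟩ hx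
    · obtain ⟨m, hm⟩ := ho
      have hx2 : x = 2*m + 1 := by omega
      subst hx2
      simp [hg, integral_cos_pow_odd']
  have hasg : HasSum g (π * besselI0 z) :=
    (hinj.hasSum_iff hzero).mp (by rw [hcomp]; exact ((besselI0_summable z).hasSum).mul_left π)
  have h1 : Tendsto (fun N => ∑ n ∈ Finset.range N, g n) atTop (𝓝 (π * besselI0 z)) :=
    hasg.tendsto_sum_nat
  have heq : ∀ N, ∑ n ∈ Finset.range N, g n
      = ∫ θ in (0:ℝ)..π, ∑ n ∈ Finset.range N, (z * Real.cos θ)^n / (n.factorial:ℝ) := by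
    intro N
    rw [intervalIntegral.integral_finset_sum]
    · refine Finset.sum_congr rfl fun n _ => ?_
      simp only [hg]
      rw [← intervalIntegral.integral_const_mul]
      congr 1
      funext θ
      rw [mul_pow]
      ring
    · intro n _
      apply Continuous.intervalIntegrable
      fun_prop
  have h2 : Tendsto (fun N => ∑ n ∈ Finset.range N, g n) atTop
      (𝓝 (∫ θ in (0:ℝ)..π, Real.exp (z * Real.cos θ))) := by
    simp_rw [heq]
    refine intervalIntegral.tendsto_integral_filter_of_dominated_convergence
      (fun _ => Real.exp |z|) ?_ ?_ ?_ ?_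
    · exact Filter.Eventually.of_forall fun N =>
        (Continuous.aestronglyMeasurable (by fun_prop))
    · refine Filter.Eventually.of_forall fun N => ?_
      refine Filter.Eventually.of_forall fun θ => fun _ => ?_
      calc ‖∑ n ∈ Finset.range N, (z * Real.cos θ)^n / (n.factorial:ℝ)‖
          ≤ ∑ n ∈ Finset.range N, |(z * Real.cos θ)^n / (n.factorial:ℝ)| :=
            Finset.abs_sum_le_sum_abs _ _
        _ = ∑ n ∈ Finset.range N, |z * Real.cos θ|^n / (n.factorial:ℝ) := by
            refine Finset.sum_congr rfl fun n _ => ?_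
            rw [abs_div, abs_pow, Nat.abs_cast]
        _ ≤ Real.exp |z * Real.cos θ| := Real.sum_le_exp_of_nonneg (abs_nonneg _) N
        _ ≤ Real.exp |z| := by
            apply Real.exp_le_exp.mpr
            rw [abs_mul]
            calc |z| * |Real.cos θ| ≤ |z| * 1 := by
                  exact mul_le_mul_of_nonneg_left (Real.abs_cos_le_one θ) (abs_nonneg z)
              _ = |z| := mul_one _
    · exact Continuous.intervalIntegrable (by fun_prop) _ _
    · refine Filter.Eventually.of_forall fun θ => fun _ => ?_
      have := (NormedSpace.expSeries_div_hasSum_exp (z * Real.cos θ)).tendsto_sum_nat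
      rw [← Real.exp_eq_exp_ℝ] at this
      exact this
  exact tendsto_nhds_unique h1 h2

lemma moebius_integral (k : ℝ) (hk0 : 0 ≤ k) (hk1 : k < 1) (H : ℝ → ℝ)
    (hH : ContinuousOn H (Set.Icc (-1:ℝ) 1)) :
    (∫ θ in (0:ℝ)..π, (Real.sqrt (1 - k^2) / (1 - k * Real.cos θ)) *
      H ((k - Real.cos θ)/(1 - k * Real.cos θ)))
      = ∫ ψ in (0:ℝ)..π, H (Real.cos ψ) := by
  have hπ : (0:ℝ) ≤ π := pi_pos.le
  -- denominator positivity
  have hden : ∀ θ : ℝ, 0 < 1 - k * Real.cos θ := by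
    intro θ
    have h1 : k * Real.cos θ ≤ k * 1 := by
      rcases eq_or_lt_of_le hk0 with h | h
      · simp [← h]
      · exact mul_le_mul_of_nonneg_left (Real.cos_le_one θ) hk0
    nlinarith
  -- the ratio is in [-1, 1]
  have hr_mem : ∀ θ : ℝ, (k - Real.cos θ)/(1 - k * Real.cos θ) ∈ Set.Icc (-1:ℝ) 1 := by
    intro θ
    have hd := hden θ
    constructor
    · rw [le_div_iff₀ hd]
      have := Real.cos_le_one θ
      nlinarith
    · rw [div_le_one hd]
      have := Real.neg_one_le_cos θ
      nlinarith
  set r : ℝ → ℝ := fun θ => (k - Real.cos θ)/(1 - k * Real.cos θ) with hr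
  set m : ℝ → ℝ := fun θ => Real.arccos (r θ) with hm
  have hrc : Continuous r := by
    apply Continuous.div (by fun_prop) (by fun_prop)
    intro θ; exact (hden θ).ne'
  have hmc : Continuous m := Real.continuous_arccos.comp hrc
  have hk2 : (0:ℝ) < 1 - k^2 := by nlinarith
  have hsq : Real.sqrt (1-k^2) > 0 := Real.sqrt_pos.mpr hk2
  -- derivative of m on the open interval
  have hderiv : ∀ θ ∈ Set.Ioo (0:ℝ) π,
      HasDerivAt m (-(Real.sqrt (1 - k^2) / (1 - k * Real.cos θ))) θ := by
    intro θ hθ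
    have hsin : 0 < Real.sin θ := Real.sin_pos_of_pos_of_lt_pi hθ.1 hθ.2
    have hcos1 : Real.cos θ < 1 := by
      nlinarith [Real.sin_sq_add_cos_sq θ, hsin, Real.cos_le_one θ]
    have hcos2 : -1 < Real.cos θ := by
      nlinarith [Real.sin_sq_add_cos_sq θ, hsin, Real.neg_one_le_cos θ]
    have hd := hden θ
    -- r θ strictly inside (-1,1)
    have hrlt : r θ < 1 := by
      rw [hr]; simp only
      rw [div_lt_one hd]; nlinarith
    have hrgt : -1 < r θ := by
      rw [hr]; simp only
      rw [lt_div_iff₀ hd]; nlinarith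
    -- derivative of r
    have hu : HasDerivAt (fun θ => k - Real.cos θ) (Real.sin θ) θ := by
      simpa using (Real.hasDerivAt_cos θ).const_sub k
    have hv : HasDerivAt (fun θ => 1 - k * Real.cos θ) (k * Real.sin θ) θ := by
      have := ((Real.hasDerivAt_cos θ).const_mul k).const_sub 1
      simpa using this
    have hrd : HasDerivAt r ((1 - k^2) * Real.sin θ / (1 - k * Real.cos θ)^2) θ := by
      have := hu.div hv hd.ne'
      refine this.congr_deriv ?_
      ring
    have harc : HasDerivAt Real.arccos (-(1 / Real.sqrt (1 - (r θ)^2))) (r θ) :=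
      Real.hasDerivAt_arccos (by linarith) (by linarith)
    have hcomp := harc.comp θ hrd
    refine hcomp.congr_deriv ?_
    symm
    -- algebra: -(1/√(1-r²)) * r' = -(√(1-k²)/(1-kcosθ))
    have hsqr : Real.sqrt (1 - (r θ)^2) = Real.sqrt (1-k^2) * Real.sin θ / (1 - k * Real.cos θ) := by
      have h1 : 1 - (r θ)^2 = (1-k^2) * (Real.sin θ)^2 / (1 - k * Real.cos θ)^2 := by
        rw [hr]; simp only
        have hs := Real.sin_sq_add_cos_sq θ
        field_simp
        nlinarith [hs]
      have h2 : (1-k^2) * (Real.sin θ)^2 / (1 - k * Real.cos θ)^2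
          = (Real.sqrt (1-k^2) * Real.sin θ / (1 - k * Real.cos θ))^2 := by
        rw [div_pow, mul_pow, Real.sq_sqrt hk2.le]
      rw [h1, h2, Real.sqrt_sq (by positivity)]
    rw [hsqr]
    field_simp
    linear_combination (-1) * Real.sq_sqrt hk2.le
  -- endpoints
  have h0 : m 0 = π := by
    simp only [hm, hr, Real.cos_zero]
    rw [show (k-1)/(1-k*1) = -1 by rw [div_eq_iff (by nlinarith)]; ring]
    exact Real.arccos_neg_one
  have hpi : m π = 0 := by
    simp only [hm, hr, Real.cos_pi]
    rw [show (k-(-1))/(1-k*(-1)) = 1 by rw [div_eq_iff (by nlinarith)]; ring]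
    exact Real.arccos_one
  have hf'c : Continuous (fun θ : ℝ => -(Real.sqrt (1-k^2)/(1 - k*Real.cos θ))) := by
    apply Continuous.neg
    apply Continuous.div (by fun_prop) (by fun_prop)
    exact fun θ => (hden θ).ne'
  have hgc : ContinuousOn (fun ψ => H (Real.cos ψ)) (m '' (Set.uIcc 0 π)) :=
    hH.comp Real.continuous_cos.continuousOn
      (fun ψ _ => ⟨Real.neg_one_le_cos ψ, Real.cos_le_one ψ⟩)
  have hsub := intervalIntegral.integral_comp_smul_deriv'' (a := (0:ℝ)) (b := π)
      (f := m) (f' := fun θ : ℝ => -(Real.sqrt (1-k^2)/(1 - k*Real.cos θ)))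
      (g := fun ψ => H (Real.cos ψ))
      hmc.continuousOn
      (fun θ hθ => by
        rw [min_eq_left hπ, max_eq_right hπ] at hθ
        exact (hderiv θ hθ).hasDerivWithinAt)
      hf'c.continuousOn hgc
  rw [h0, hpi, intervalIntegral.integral_symm (0:ℝ) π] at hsub
  have hval : ∀ θ : ℝ, Real.cos (m θ) = r θ := fun θ =>
    Real.cos_arccos (hr_mem θ).1 (hr_mem θ).2
  have hLHS : (∫ θ in (0:ℝ)..π,
      (fun θ : ℝ => -(Real.sqrt (1-k^2)/(1 - k*Real.cos θ))) θ •
        ((fun ψ => H (Real.cos ψ)) ∘ m) θ)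
      = -∫ θ in (0:ℝ)..π, (Real.sqrt (1 - k^2) / (1 - k * Real.cos θ)) * H (r θ) := by
    rw [← intervalIntegral.integral_neg]
    apply intervalIntegral.integral_congr
    intro θ _
    simp only [Function.comp_apply, smul_eq_mul, hval θ]
    ring
  rw [hLHS] at hsub
  have := neg_injective hsub
  simpa [hr] using this

lemma integral_exp_neg_mul' (c x : ℝ) (hc : 0 < c) :
    ∫ t in (0:ℝ)..x, Real.exp (-(c*t)) = (1 - Real.exp (-(c*x)))/c := by
  have h : ∀ t : ℝ, HasDerivAt (fun s => -(Real.exp (-(c*s))/c)) (Real.exp (-(c*t))) t := by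
    intro t
    have h1 : HasDerivAt (fun s : ℝ => -(c*s)) (-c) t := by
      simpa [mul_comm] using (hasDerivAt_id t).const_mul (-c)
    have h2 := (Real.hasDerivAt_exp (-(c*t))).comp t h1
    have h4 := (h2.div_const c).neg
    refine h4.congr_deriv ?_
    rw [mul_neg, neg_div, neg_neg, mul_div_assoc, div_self hc.ne', mul_one]
  rw [intervalIntegral.integral_eq_sub_of_hasDerivAt (fun t _ => h t)
    (Continuous.intervalIntegrable (by fun_prop) _ _)]
  field_simp
  simp only [mul_zero, neg_zero, Real.exp_zero]
  ring

lemma fubini_exp (c : ℝ → ℝ) (hc : Continuous c) (x : ℝ) (hx : 0 ≤ x) :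
    (∫ t in (0:ℝ)..x, ∫ θ in (0:ℝ)..π, Real.exp (-(c θ * t)))
      = ∫ θ in (0:ℝ)..π, ∫ t in (0:ℝ)..x, Real.exp (-(c θ * t)) := by
  have hπ : (0:ℝ) ≤ π := pi_pos.le
  simp only [intervalIntegral.integral_of_le hx, intervalIntegral.integral_of_le hπ]
  apply MeasureTheory.integral_integral_swap
  rw [Measure.prod_restrict, ← Measure.volume_eq_prod]
  have hcont : Continuous (Function.uncurry fun (t θ : ℝ) => Real.exp (-(c θ * t))) := by
    fun_prop
  exact (hcont.continuousOn.integrableOn_compact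
      (isCompact_Icc.prod isCompact_Icc)).mono_set
    (Set.prod_mono Set.Ioc_subset_Icc_self Set.Ioc_subset_Icc_self)

lemma hden' {k : ℝ} (hk0 : 0 ≤ k) (hk1 : k < 1) (c : ℝ) (hc1 : -1 ≤ c) (hc2 : c ≤ 1) :
    0 < 1 - k * c := by nlinarith

lemma keyK (k γbar x : ℝ) (hk0 : 0 ≤ k) (hk1 : k < 1) (hγ : 0 < γbar) :
    (∫ θ in (0:ℝ)..π, Real.sqrt (1-k^2)/(1 - k*Real.cos θ) *
        Real.exp (-(x * (1 - k*Real.cos θ)) / (γbar * (1-k^2))))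
      = ∫ ψ in (0:ℝ)..π, Real.exp (-x / (γbar * (1 - k * Real.cos ψ))) := by
  have hk2 : (0:ℝ) < 1 - k^2 := by nlinarith
  have hH : ContinuousOn (fun c => Real.exp (-x / (γbar * (1 - k*c)))) (Set.Icc (-1:ℝ) 1) := by
    apply Real.continuous_exp.comp_continuousOn
    apply ContinuousOn.div continuousOn_const
    · fun_prop
    · intro c hc
      have := hden' hk0 hk1 c hc.1 hc.2
      positivity
  rw [← moebius_integral k hk0 hk1 _ hH]
  apply intervalIntegral.integral_congr
  intro θ _
  have hd : 0 < 1 - k * Real.cos θ :=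
    hden' hk0 hk1 _ (Real.neg_one_le_cos θ) (Real.cos_le_one θ)
  simp only
  congr 1
  have h1 : 1 - k * ((k - Real.cos θ)/(1 - k*Real.cos θ)) = (1-k^2)/(1 - k*Real.cos θ) := by
    field_simp
    ring
  rw [h1]
  congr 1
  field_simp

theorem hoyt_cdf (q γbar x : ℝ) (hq0 : 0 < q) (hq1 : q ≤ 1) (hγ : 0 < γbar) (hx : 0 ≤ x) :
    (∫ t in (0:ℝ)..x,
        ((1 + q ^ 2) / (2 * q * γbar)) *
          Real.exp (-((1 + q ^ 2) ^ 2 * t) / (4 * q ^ 2 * γbar)) *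
            besselI0 ((1 - q ^ 4) * t / (4 * q ^ 2 * γbar))) =
      1 - (1 / π) * ∫ θ in (0:ℝ)..π,
        Real.exp (-x / (γbar * (1 - (1 - q ^ 2) / (1 + q ^ 2) * Real.cos θ))) := by
  have h1q : (0:ℝ) < 1 + q^2 := by positivity
  set k : ℝ := (1 - q^2)/(1 + q^2) with hk
  set A : ℝ := (1 + q^2)^2/(4*q^2*γbar) with hA
  set B : ℝ := (1 - q^4)/(4*q^2*γbar) with hB
  set C : ℝ := (1 + q^2)/(2*q*γbar) with hC
  set S : ℝ := Real.sqrt (1 - k^2) with hS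
  have hk0 : 0 ≤ k := by
    rw [hk]; apply div_nonneg; nlinarith; linarith
  have hk1 : k < 1 := by
    rw [hk, div_lt_one h1q]; nlinarith
  have hk2 : (0:ℝ) < 1 - k^2 := by nlinarith
  have hSval : S = 2*q/(1+q^2) := by
    rw [hS, hk, show 1 - ((1-q^2)/(1+q^2))^2 = (2*q/(1+q^2))^2 by field_simp; ring]
    exact Real.sqrt_sq (by positivity)
  have hA0 : 0 < A := by rw [hA]; positivity
  have hCS : C = A * S := by rw [hC, hA, hSval]; field_simp; ring
  have hAγ : A * (γbar * (1 - k^2)) = 1 := by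
    rw [hA, hk]; field_simp; ring
  have hBk : B = A * k := by rw [hB, hA, hk]; field_simp; ring
  have hdk : ∀ θ : ℝ, 0 < 1 - k * Real.cos θ := fun θ =>
    hden' hk0 hk1 _ (Real.neg_one_le_cos θ) (Real.cos_le_one θ)
  have hc0 : ∀ θ : ℝ, 0 < A - B * Real.cos θ := by
    intro θ
    rw [hBk]
    have := hdk θ
    nlinarith
  have hπ0 : π ≠ 0 := pi_ne_zero
  -- Step 1: pointwise rewriting of the integrand via the Bessel integral representation
  have step1 : ∀ t : ℝ,
      C * Real.exp (-((1 + q ^ 2) ^ 2 * t) / (4 * q ^ 2 * γbar)) *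
        besselI0 ((1 - q ^ 4) * t / (4 * q ^ 2 * γbar))
      = (C/π) * ∫ θ in (0:ℝ)..π, Real.exp (-((A - B*Real.cos θ) * t)) := by
    intro t
    have harg : (1 - q^4)*t/(4*q^2*γbar) = B*t := by rw [hB]; ring
    have hexp : -((1 + q^2)^2*t)/(4*q^2*γbar) = -(A*t) := by rw [hA]; ring
    rw [harg, hexp]
    have hb := besselI0_pi (B*t)
    calc C * Real.exp (-(A*t)) * besselI0 (B*t)
        = (C/π) * (Real.exp (-(A*t)) * (π * besselI0 (B*t))) := by
          field_simp
      _ = (C/π) * (Real.exp (-(A*t)) * ∫ θ in (0:ℝ)..π, Real.exp (B*t*Real.cos θ)) := by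
          rw [hb]
      _ = (C/π) * ∫ θ in (0:ℝ)..π, Real.exp (-(A*t)) * Real.exp (B*t*Real.cos θ) := by
          rw [intervalIntegral.integral_const_mul]
      _ = (C/π) * ∫ θ in (0:ℝ)..π, Real.exp (-((A - B*Real.cos θ) * t)) := by
          congr 1
          apply intervalIntegral.integral_congr
          intro θ _
          simp only
          rw [← Real.exp_add]
          congr 1
          ring
  -- Step 2: rewrite the full integral, pull out constant, Fubini
  rw [intervalIntegral.integral_congr (g := fun t =>
      (C/π) * ∫ θ in (0:ℝ)..π, Real.exp (-((A - B*Real.cos θ) * t))) (fun t _ => step1 t)]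
  rw [intervalIntegral.integral_const_mul]
  rw [fubini_exp (fun θ => A - B*Real.cos θ) (by fun_prop) x hx]
  -- Step 3: inner integral
  rw [intervalIntegral.integral_congr (g := fun θ =>
      (1 - Real.exp (-((A - B*Real.cos θ)*x)))/(A - B*Real.cos θ))
      (fun θ _ => integral_exp_neg_mul' _ x (hc0 θ))]
  -- Step 4: pointwise algebra to keyK form
  have step4 : ∀ θ ∈ Set.uIcc (0:ℝ) π,
      (fun θ => (1 - Real.exp (-((A - B*Real.cos θ)*x)))/(A - B*Real.cos θ)) θ
      = (fun θ => (π/C) * (1/π) * (S/(1 - k*Real.cos θ)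
          - S/(1 - k*Real.cos θ) * Real.exp (-(x * (1 - k*Real.cos θ)) / (γbar * (1-k^2))))) θ := by
    intro θ _
    simp only
    have hd := hdk θ
    have hS0 : 0 < S := by rw [hSval]; positivity
    have hC0 : 0 < C := by rw [hC]; positivity
    have hexp2 : (A - B*Real.cos θ)*x = x * (1 - k*Real.cos θ) / (γbar * (1-k^2)) := by
      rw [hBk]
      have hγk : 0 < γbar * (1 - k^2) := by positivity
      rw [eq_div_iff (by positivity)]
      linear_combination (x * (1 - k*Real.cos θ)) * hAγ
    rw [hexp2]
    have hAB : A - B*Real.cos θ = A * (1 - k*Real.cos θ) := by rw [hBk]; ring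
    rw [hAB, hCS]
    rw [neg_div]
    field_simp
  rw [intervalIntegral.integral_congr step4]
  rw [intervalIntegral.integral_const_mul]
  -- Step 5: split the integral
  have hScont : Continuous (fun θ : ℝ => S/(1 - k*Real.cos θ)) := by
    apply Continuous.div continuous_const (by fun_prop)
    exact fun θ => (hdk θ).ne'
  have hint1 : IntervalIntegrable (fun θ : ℝ => S/(1 - k*Real.cos θ)) volume 0 π :=
    hScont.intervalIntegrable _ _
  have hint2 : IntervalIntegrable (fun θ : ℝ => S/(1 - k*Real.cos θ) *
      Real.exp (-(x * (1 - k*Real.cos θ)) / (γbar * (1-k^2)))) volume 0 π := by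
    apply Continuous.intervalIntegrable
    apply hScont.mul
    apply Real.continuous_exp.comp
    apply Continuous.div (by fun_prop) continuous_const
    intro _
    have : 0 < γbar * (1 - k^2) := by positivity
    positivity
  rw [intervalIntegral.integral_sub hint1 hint2]
  -- Step 6: evaluate both integrals via keyK
  have hpi_int : (∫ θ in (0:ℝ)..π, S/(1 - k*Real.cos θ)) = π := by
    have := keyK k 1 0 hk0 hk1 one_pos
    simpa [hS] using this
  have hx_int := keyK k γbar x hk0 hk1 hγ
  rw [hS] at hpi_int ⊢
  rw [hpi_int, hx_int]
  -- Step 7: final algebra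
  have hC0 : C ≠ 0 := by rw [hC]; positivity
  field_simp
end
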